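/- Let A be a finite set, ω ∈ A^{ℤ^d}, (B,‖·‖) a Banach space, (Q_j) a Følner sequence in ℤ^d, and F : F → B a bounded, ω-invariant, almost additive field with boundary term b. Assume all frequencies ν_P := lim_j ♯_P(ω|_{Q_j})/|Q_j| exist, and let F̄ := lim_j F(Q_j)/|Q_j| (which exists). Then for every L ∈ ℕ: ‖ F̄ − Σ_{P∈A^{Λ_L}} ν_P F̃(P)/|Λ_L| ‖ ≤ b(Λ_L)/|Λ_L|. -/

import Mathlib

open Filter Topology

/-- The group `ℤ^d`. -/
abbrev Zd (d : ℕ) := Fin d → ℤ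

/-- The `ℓ¹`-distance on `ℤ^d`. -/
def distZ {d : ℕ} (v w : Zd d) : ℕ := ∑ i, (v i - w i).natAbs

/-- The translation action `τ̃_g Λ = Λ - g` on finite subsets of `ℤ^d`. -/
def translateZ {d : ℕ} (g : Zd d) (Λ : Finset (Zd d)) : Finset (Zd d) :=
  Λ.image (fun v => v - g)

/-- The (two-sided) `r`-boundary of a finite set `Λ ⊆ ℤ^d`. -/
def rBoundaryZ {d : ℕ} (r : ℕ) (Λ : Finset (Zd d)) : Set (Zd d) :=
  {x | x ∉ Λ ∧ ∃ v ∈ Λ, distZ x v ≤ r} ∪ {v | v ∈ Λ ∧ ∃ x, x ∉ Λ ∧ distZ v x ≤ r}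

/-- A Følner sequence in `ℤ^d`: nonempty finite sets whose `r`-boundary is
asymptotically negligible compared to the volume, for every `r > 0`. -/
def IsFolnerZ {d : ℕ} (Q : ℕ → Finset (Zd d)) : Prop :=
  (∀ j, (Q j).Nonempty) ∧
  ∀ r : ℕ, 0 < r →
    Tendsto (fun j => ((rBoundaryZ r (Q j)).ncard : ℝ) / (Q j).card) atTop (nhds 0)

/-- A boundary term on the finite subsets of `ℤ^d`. -/
structure BoundaryTermZ (d : ℕ) where
  b : Finset (Zd d) → ℝ
  nonneg : ∀ Λ, 0 ≤ b Λ
  invariant : ∀ g Λ, b (translateZ g Λ) = b Λ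
  folner : ∀ Q : ℕ → Finset (Zd d), IsFolnerZ Q →
    Tendsto (fun j => b (Q j) / (Q j).card) atTop (nhds 0)
  bounded : ∃ D : ℝ, ∀ Λ : Finset (Zd d), Λ.Nonempty → b Λ ≤ D * Λ.card
  union_le : ∀ Λ Λ', b (Λ ∪ Λ') ≤ b Λ + b Λ'
  inter_le : ∀ Λ Λ', b (Λ ∩ Λ') ≤ b Λ + b Λ'
  sdiff_le : ∀ Λ Λ', b (Λ \ Λ') ≤ b Λ + b Λ'

/-- The bound `D_b` of a boundary term. -/
noncomputable def BoundaryTermZ.D {d : ℕ} (b : BoundaryTermZ d) : ℝ :=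
  sSup {x | ∃ Λ : Finset (Zd d), Λ.Nonempty ∧ x = b.b Λ / Λ.card}

/-- Two patterns (given as total functions restricted to their domains) are
equivalent iff one is a translate of the other:  `P' |_{Λ'}` is the
`g`-translate of `P |_Λ`. -/
def PatEquivZ {d : ℕ} {A : Type*} (Λ : Finset (Zd d)) (P : Zd d → A)
    (Λ' : Finset (Zd d)) (P' : Zd d → A) : Prop :=
  ∃ g : Zd d, Λ' = translateZ g Λ ∧ ∀ v ∈ Λ, P' (v - g) = P v

open Classical in
/-- `♯_P P'`: the number of occurrences of (translates of) the pattern `P|_Λ`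
in the pattern `P'|_{Λ'}`. -/
noncomputable def sharpZ {d : ℕ} {A : Type*} (Λ : Finset (Zd d)) (P : Zd d → A)
    (Λ' : Finset (Zd d)) (P' : Zd d → A) : ℕ :=
  (Λ'.powerset.filter (fun Λ'' => PatEquivZ Λ P Λ'' P')).card

/-- Almost additivity of a field with respect to a boundary term. -/
def AlmostAdditiveZ {d : ℕ} {B : Type*} [NormedAddCommGroup B]
    (F : Finset (Zd d) → B) (b : BoundaryTermZ d) : Prop :=
  ∀ (n : ℕ) (Λs : Fin n → Finset (Zd d)),
    (∀ i j, i ≠ j → Disjoint (Λs i) (Λs j)) →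
    ‖F (Finset.univ.biUnion Λs) - ∑ i, F (Λs i)‖ ≤ ∑ i, b.b (Λs i)

/-- `ω`-invariance of a field. -/
def InvariantZ {d : ℕ} {A : Type*} {B : Type*} (ω : Zd d → A)
    (F : Finset (Zd d) → B) : Prop :=
  ∀ Λ Λ' : Finset (Zd d), PatEquivZ Λ ω Λ' ω → F Λ = F Λ'

/-- `Ft` is the pattern function of the `ω`-invariant field `F`. -/
def IsPatternFnZ {d : ℕ} {A : Type*} {B : Type*} [Zero B] (ω : Zd d → A)
    (F : Finset (Zd d) → B) (Ft : Finset (Zd d) → (Zd d → A) → B) : Prop :=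
  (∀ (Λ : Finset (Zd d)) (P : Zd d → A) (Λ' : Finset (Zd d)),
      PatEquivZ Λ P Λ' ω → Ft Λ P = F Λ') ∧
  (∀ (Λ : Finset (Zd d)) (P : Zd d → A),
      (∀ Λ' : Finset (Zd d), ¬ PatEquivZ Λ P Λ' ω) → Ft Λ P = 0)

/-- Extension of a pattern `P : Λ → A` to a total function on `ℤ^d`,
filling in with the coloring `ω` off `Λ` (the quantities below only depend on
the restriction to `Λ`). -/
def extendPatZ {d : ℕ} {A : Type*} (ω : Zd d → A) (Λ : Finset (Zd d))
    (P : {x // x ∈ Λ} → A) : Zd d → A :=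
  fun v => if h : v ∈ Λ then P ⟨v, h⟩ else ω v

/-- The cube `Λ_L = ([0,L) ∩ ℤ)^d`. -/
noncomputable def stdCube (d L : ℕ) : Finset (Zd d) :=
  Fintype.piFinset (fun _ => Finset.Ico (0 : ℤ) (L : ℤ))

/-- The bound `C_F` of a bounded field. -/
noncomputable def fieldBoundZ {d : ℕ} {B : Type*} [NormedAddCommGroup B]
    (F : Finset (Zd d) → B) : ℝ :=
  sSup {x | ∃ Λ : Finset (Zd d), Λ.Nonempty ∧ x = ‖F Λ‖ / Λ.card}

section Aux
variable {d : ℕ} {B : Type*} [NormedAddCommGroup B]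

lemma F_empty {F : Finset (Zd d) → B} {b : BoundaryTermZ d}
    (hAA : AlmostAdditiveZ F b) : F ∅ = 0 := by
  have h := hAA 0 (fun _ => ∅) (fun i _ _ => i.elim0)
  simpa using h

lemma aa_general {F : Finset (Zd d) → B} {b : BoundaryTermZ d}
    (hAA : AlmostAdditiveZ F b) {ι : Type*} [DecidableEq ι]
    (s : Finset ι) (f : ι → Finset (Zd d))
    (hdisj : ∀ i ∈ s, ∀ j ∈ s, i ≠ j → Disjoint (f i) (f j)) :
    ‖F (s.biUnion f) - ∑ i ∈ s, F (f i)‖ ≤ ∑ i ∈ s, b.b (f i) := by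
  classical
  set e := s.equivFin with he
  have key := hAA s.card (fun k => f ((e.symm k : {x // x ∈ s}) : ι)) ?_
  · have hU : Finset.univ.biUnion (fun k => f ((e.symm k : {x // x ∈ s}) : ι)) = s.biUnion f := by
      ext v
      simp only [Finset.mem_biUnion, Finset.mem_univ, true_and]
      constructor
      · rintro ⟨k, hk⟩
        exact ⟨(e.symm k : ι), (e.symm k).2, hk⟩
      · rintro ⟨i, hi, hv⟩
        exact ⟨e ⟨i, hi⟩, by simpa using hv⟩
    have hsF : ∑ k : Fin s.card, F (f ((e.symm k : {x // x ∈ s}) : ι)) = ∑ i ∈ s, F (f i) := by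
      rw [Equiv.sum_comp e.symm (fun x : {x // x ∈ s} => F (f (x : ι)))]
      exact Finset.sum_coe_sort s (fun i => F (f i))
    have hsb : ∑ k : Fin s.card, b.b (f ((e.symm k : {x // x ∈ s}) : ι)) = ∑ i ∈ s, b.b (f i) := by
      rw [Equiv.sum_comp e.symm (fun x : {x // x ∈ s} => b.b (f (x : ι)))]
      exact Finset.sum_coe_sort s (fun i => b.b (f i))
    rwa [hU, hsF, hsb] at key
  · intro i j hij
    refine hdisj _ (e.symm i).2 _ (e.symm j).2 (fun hc => hij ?_)
    exact e.symm.injective (Subtype.ext hc) |>.symm ▸ rfl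

lemma aa_withR {F : Finset (Zd d) → B} {b : BoundaryTermZ d}
    (hAA : AlmostAdditiveZ F b) (s : Finset (Zd d)) (f : Zd d → Finset (Zd d))
    (R : Finset (Zd d))
    (hdisj : ∀ i ∈ s, ∀ j ∈ s, i ≠ j → Disjoint (f i) (f j))
    (hdR : ∀ i ∈ s, Disjoint R (f i)) :
    ‖F (R ∪ s.biUnion f) - (F R + ∑ i ∈ s, F (f i))‖ ≤ b.b R + ∑ i ∈ s, b.b (f i) := by
  classical
  set f' : Option (Zd d) → Finset (Zd d) := fun o => o.elim R f with hf'
  have h := aa_general hAA (insert none (s.image some)) f' ?_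
  · have hnone : (none : Option (Zd d)) ∉ s.image some := by simp
    have hinj : ∀ x ∈ s, ∀ y ∈ s, some x = some y → x = y := by
      intro x _ y _ h; exact Option.some_injective _ h
    have hb : (insert none (s.image some)).biUnion f' = R ∪ s.biUnion f := by
      rw [Finset.biUnion_insert]
      congr 1
      ext v
      simp only [Finset.mem_biUnion, Finset.mem_image]
      constructor
      · rintro ⟨o, ⟨a, ha, rfl⟩, hv⟩
        exact ⟨a, ha, hv⟩
      · rintro ⟨a, ha, hv⟩
        exact ⟨some a, ⟨a, ha, rfl⟩, hv⟩
    rw [hb, Finset.sum_insert hnone, Finset.sum_insert hnone,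
        Finset.sum_image hinj, Finset.sum_image hinj] at h
    simpa [hf'] using h
  · rintro (_ | a) hi (_ | a') hj hij
    · exact absurd rfl hij
    · have ha' : a' ∈ s := by simpa using hj
      exact hdR a' ha'
    · have ha : a ∈ s := by simpa using hi
      exact (hdR a ha).symm
    · have ha : a ∈ s := by simpa using hi
      have ha' : a' ∈ s := by simpa using hj
      exact hdisj a ha a' ha' (fun hc => hij (by rw [hc]))

lemma rBoundary_finite {d : ℕ} (r : ℕ) (Λ : Finset (Zd d)) : (rBoundaryZ r Λ).Finite := by
  apply Set.Finite.union
  · have hsub : {x : Zd d | x ∉ Λ ∧ ∃ v ∈ Λ, distZ x v ≤ r}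
        ⊆ ⋃ v ∈ (Λ : Set (Zd d)), {x : Zd d | ∀ i, x i ∈ Set.Icc (v i - r) (v i + r)} := by
      rintro x ⟨-, v, hv, hdist⟩
      refine Set.mem_biUnion hv ?_
      intro i
      have hle : (x i - v i).natAbs ≤ r :=
        le_trans (Finset.single_le_sum (f := fun i => (x i - v i).natAbs)
          (fun _ _ => Nat.zero_le _) (Finset.mem_univ i)) hdist
      simp only [Set.mem_Icc]
      omega
    refine Set.Finite.subset (Set.Finite.biUnion Λ.finite_toSet (fun v _ => ?_)) hsub
    have heq : {x : Zd d | ∀ i, x i ∈ Set.Icc (v i - r) (v i + r)}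
        = Set.pi Set.univ (fun i => Set.Icc (v i - (r:ℤ)) (v i + r)) := by
      ext x; simp [Set.mem_pi, Pi.le_def, forall_and, sub_le_iff_le_add]
    rw [heq]
    exact Set.Finite.pi (fun i => Set.finite_Icc _ _)
  · exact Λ.finite_toSet.subset (fun x hx => hx.1)


lemma scalar_id1 (V q : ℝ) (hV : V ≠ 0) (hq : q ≠ 0) : (V*q)⁻¹ * V = q⁻¹ := by
  field_simp

lemma scalar_id2 (V q s : ℝ) (hV : V ≠ 0) (hq : q ≠ 0) :
    s / q * V⁻¹ = (V*q)⁻¹ * s := by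
  rw [div_eq_mul_inv, mul_inv]
  ring

lemma scalar_id3 (V q x y c : ℝ) (hV : V ≠ 0) (hq : q ≠ 0) :
    (V*q)⁻¹ * (c*(V*x) + q*y) = c*(x/q) + y/V := by
  field_simp

end Aux
set_option maxHeartbeats 2000000 in
/-- **Theorem (error bound between the limit and the frequency average).**
Under the assumptions of the ergodic theorem for finitely many colors on
`ℤ^d`, for every `L ≥ 1` one has
`‖F̄ − Σ_{P ∈ A^{Λ_L}} ν_P F̃(P)/|Λ_L|‖ ≤ b(Λ_L)/|Λ_L|`. -/
theorem stmt2 {d : ℕ} (hd : 1 ≤ d) {A : Type*} [Fintype A] (ω : Zd d → A)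
    {B : Type*} [NormedAddCommGroup B] [NormedSpace ℝ B] [CompleteSpace B]
    (Q : ℕ → Finset (Zd d)) (hQ : IsFolnerZ Q)
    (F : Finset (Zd d) → B) (b : BoundaryTermZ d)
    (hAA : AlmostAdditiveZ F b) (hInv : InvariantZ ω F)
    (hBd : ∃ C : ℝ, ∀ Λ : Finset (Zd d), Λ.Nonempty → ‖F Λ‖ ≤ C * Λ.card)
    (Ft : Finset (Zd d) → (Zd d → A) → B) (hFt : IsPatternFnZ ω F Ft)
    (ν : Finset (Zd d) → (Zd d → A) → ℝ)
    (hν : ∀ (Λ : Finset (Zd d)) (P : Zd d → A),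
      Tendsto (fun j => (sharpZ Λ P (Q j) ω : ℝ) / (Q j).card) atTop (nhds (ν Λ P)))
    (Fbar : B)
    (hFbar : Tendsto (fun j => ((Q j).card : ℝ)⁻¹ • F (Q j)) atTop (nhds Fbar)) :
    ∀ L : ℕ, 1 ≤ L →
      ‖Fbar - ∑ P : {x // x ∈ stdCube d L} → A,
          ν (stdCube d L) (extendPatZ ω (stdCube d L) P) •
            (((stdCube d L).card : ℝ)⁻¹ • Ft (stdCube d L) (extendPatZ ω (stdCube d L) P))‖
        ≤ b.b (stdCube d L) / (stdCube d L).card := by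
  classical
  obtain ⟨C, hC⟩ := hBd
  obtain ⟨D, hD⟩ := b.bounded
  set C0 := max C 0 with hC0def
  set D0 := max D 0 with hD0def
  have hC0nn : 0 ≤ C0 := le_max_right _ _
  have hD0nn : 0 ≤ D0 := le_max_right _ _
  have hC0' : ∀ Λ : Finset (Zd d), ‖F Λ‖ ≤ C0 * Λ.card := by
    intro Λ
    rcases Λ.eq_empty_or_nonempty with h | h
    · simp [h, F_empty hAA]
    · exact (hC Λ h).trans
        (mul_le_mul_of_nonneg_right (le_max_left _ _) (Nat.cast_nonneg _))
  have hD0' : ∀ Λ : Finset (Zd d), Λ.Nonempty → b.b Λ ≤ D0 * Λ.card := by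
    intro Λ h
    exact (hD Λ h).trans
      (mul_le_mul_of_nonneg_right (le_max_left _ _) (Nat.cast_nonneg _))
  intro L hL
  set Λ := stdCube d L with hΛdef
  have hLz : (0:ℤ) < (L:ℤ) := by exact_mod_cast hL
  have memΛ : ∀ {v : Zd d}, v ∈ Λ ↔ ∀ i, 0 ≤ v i ∧ v i < L := by
    intro v
    simp [hΛdef, stdCube, Fintype.mem_piFinset, Finset.mem_Ico]
  have hzero : (0 : Zd d) ∈ Λ := memΛ.mpr (fun i => ⟨le_refl _, hLz⟩)
  have hΛne : Λ.Nonempty := ⟨0, hzero⟩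
  have hVpos : (0:ℝ) < Λ.card := by exact_mod_cast Finset.card_pos.mpr hΛne
  -- cubes
  set cube : Zd d → Finset (Zd d) := fun h => Λ.image (fun v => v + h) with hcubedef
  have mem_cube : ∀ {x h : Zd d}, x ∈ cube h ↔ x - h ∈ Λ := by
    intro x h
    simp only [hcubedef, Finset.mem_image]
    constructor
    · rintro ⟨v, hv, rfl⟩; simpa using hv
    · intro hx; exact ⟨x - h, hx, by abel⟩
  have self_mem_cube : ∀ h : Zd d, h ∈ cube h := by
    intro h; exact mem_cube.mpr (by simpa using hzero)
  have cube_trans : ∀ h : Zd d, cube h = translateZ (-h) Λ := by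
    intro h
    simp [translateZ, hcubedef, sub_neg_eq_add]
  have cube_inj : ∀ h h' : Zd d, cube h = cube h' → h = h' := by
    intro h h' hc
    have hinj : ∀ g : Zd d, ∀ x ∈ Λ, ∀ y ∈ Λ, x + g = y + g → x = y := by
      intro g x _ y _ hxy; exact add_right_cancel hxy
    have hsum : ∀ g : Zd d, ∑ x ∈ cube g, x = (∑ v ∈ Λ, v) + Λ.card • g := by
      intro g
      rw [hcubedef]
      rw [Finset.sum_image (hinj g), Finset.sum_add_distrib, Finset.sum_const]
    have hs : (∑ v ∈ Λ, v) + Λ.card • h = (∑ v ∈ Λ, v) + Λ.card • h' := by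
      rw [← hsum, ← hsum, hc]
    have h2 : Λ.card • h = Λ.card • h' := add_left_cancel hs
    funext i
    have h3 := congrFun h2 i
    simp only [Pi.smul_apply, nsmul_eq_mul] at h3
    have hcne : ((Λ.card : ℤ)) ≠ 0 := by
      exact_mod_cast (Finset.card_pos.mpr hΛne).ne'
    exact mul_left_cancel₀ hcne h3
  -- patterns
  set pat : Zd d → ({x // x ∈ Λ} → A) := fun h v => ω (v.1 + h) with hpatdef
  have hFcube : ∀ h : Zd d, F (cube h) = Ft Λ (extendPatZ ω Λ (pat h)) := by
    intro h
    refine (hFt.1 Λ _ (cube h) ⟨-h, cube_trans h, ?_⟩).symm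
    intro v hv
    simp [extendPatZ, hv, hpatdef, sub_neg_eq_add]
  -- offsets
  set ofs : Zd d → Zd d := fun h i => h i % (L:ℤ) with hofsdef
  have hofsmem : ∀ h, ofs h ∈ Λ := fun h => memΛ.mpr
    (fun i => ⟨Int.emod_nonneg _ hLz.ne', Int.emod_lt_of_pos _ hLz⟩)
  have hgrid : ∀ h h' : Zd d, ofs h = ofs h' → h ≠ h' → Disjoint (cube h) (cube h') := by
    intro h h' ho hne
    rw [Finset.disjoint_left]
    intro x hx hx'
    apply hne
    funext i
    have h1 := (memΛ.mp (mem_cube.mp hx)) i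
    have h2 := (memΛ.mp (mem_cube.mp hx')) i
    simp only [Pi.sub_apply] at h1 h2
    have e1 : h i % (L:ℤ) = h' i % (L:ℤ) := congrFun ho i
    have hdvd : (L:ℤ) ∣ (h i - h' i) := by
      refine Int.dvd_of_emod_eq_zero ?_
      rw [Int.sub_emod, e1]
      simp
    have habs : |h i - h' i| < (L:ℤ) := by
      rw [abs_lt]; omega
    have := Int.eq_zero_of_abs_lt_dvd hdvd habs
    omega
  have hdiam : ∀ (h x y : Zd d), x ∈ cube h → y ∈ cube h → distZ x y ≤ d * L := by
    intro h x y hx hy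
    have hx' := memΛ.mp (mem_cube.mp hx)
    have hy' := memΛ.mp (mem_cube.mp hy)
    calc distZ x y = ∑ i, (x i - y i).natAbs := rfl
    _ ≤ ∑ _i : Fin d, L := by
        refine Finset.sum_le_sum (fun i _ => ?_)
        have h1 := hx' i; have h2 := hy' i
        simp only [Pi.sub_apply] at h1 h2
        omega
    _ = d * L := by simp [Finset.sum_const, Finset.card_univ]
  -- grid sets
  set Hs : ℕ → Finset (Zd d) := fun j => (Q j).filter (fun h => cube h ⊆ Q j) with hHsdef
  set HsT : ℕ → Zd d → Finset (Zd d) :=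
    fun j t => (Hs j).filter (fun h => ofs h = t) with hHsTdef
  set Rt : ℕ → Zd d → Finset (Zd d) := fun j t => Q j \ (HsT j t).biUnion cube with hRtdef
  set Bdy : ℕ → ℝ := fun j => ((rBoundaryZ (d*L) (Q j)).ncard : ℝ) with hBdydef
  have hRb : ∀ j t, t ∈ Λ → ((Rt j t).card : ℝ) ≤ Bdy j := by
    intro j t ht
    have hsub : ↑(Rt j t) ⊆ rBoundaryZ (d*L) (Q j) := by
      intro x hx
      rw [Finset.mem_coe] at hx
      obtain ⟨hxQ, hxn⟩ := Finset.mem_sdiff.mp hx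
      set h : Zd d := fun i => x i - (x i - t i) % (L:ℤ) with hhdef
      have hxc : x ∈ cube h := by
        refine mem_cube.mpr (memΛ.mpr (fun i => ?_))
        have : (x - h) i = (x i - t i) % (L:ℤ) := by
          simp [hhdef]
        rw [this]
        exact ⟨Int.emod_nonneg _ hLz.ne', Int.emod_lt_of_pos _ hLz⟩
      have hofseq : ofs h = t := by
        funext i
        have htb := (memΛ.mp ht) i
        have key : (x i - (x i - t i) % (L:ℤ)) % (L:ℤ) = (t i) % (L:ℤ) := by
          conv_rhs => rw [show t i = x i - (x i - t i) by ring]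
          rw [Int.sub_emod (x i) ((x i - t i) % (L:ℤ)),
            Int.emod_emod_of_dvd _ dvd_rfl, ← Int.sub_emod]
        show (fun i => h i % (L:ℤ)) i = t i
        simp only [hhdef]
        rw [key, Int.emod_eq_of_lt htb.1 htb.2]
      have hnsub : ¬ cube h ⊆ Q j := by
        intro hsub'
        apply hxn
        refine Finset.mem_biUnion.mpr ⟨h, ?_, hxc⟩
        exact Finset.mem_filter.mpr
          ⟨Finset.mem_filter.mpr ⟨hsub' (self_mem_cube h), hsub'⟩, hofseq⟩
      obtain ⟨y, hyc, hyn⟩ := Finset.not_subset.mp hnsub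
      exact Or.inr ⟨hxQ, y, hyn, hdiam h x y hxc hyc⟩
    have := Set.ncard_le_ncard hsub (rBoundary_finite _ _)
    rw [Set.ncard_coe_finset] at this
    simp only [hBdydef]
    exact_mod_cast this
  have hbcube : ∀ h, b.b (cube h) = b.b Λ := by
    intro h; rw [cube_trans h, b.invariant]
  have hbΛ0 : 0 ≤ b.b Λ := b.nonneg Λ
  have est1 : ∀ j t, ‖F (Q j) - ∑ h ∈ HsT j t, F (cube h)‖
      ≤ (C0 + D0) * (Rt j t).card + (HsT j t).card * b.b Λ := by
    intro j t
    have hdisj : ∀ h ∈ HsT j t, ∀ h' ∈ HsT j t, h ≠ h' → Disjoint (cube h) (cube h') := by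
      intro h hh h' hh' hne
      have e1 := (Finset.mem_filter.mp hh).2
      have e2 := (Finset.mem_filter.mp hh').2
      exact hgrid h h' (by rw [e1, e2]) hne
    have hsubQ : (HsT j t).biUnion cube ⊆ Q j := by
      intro x hx
      obtain ⟨h, hh, hxc⟩ := Finset.mem_biUnion.mp hx
      exact (Finset.mem_filter.mp (Finset.mem_filter.mp hh).1).2 hxc
    have hbsum : ∑ h ∈ HsT j t, b.b (cube h) = (HsT j t).card * b.b Λ := by
      rw [Finset.sum_congr rfl (fun h _ => hbcube h), Finset.sum_const, nsmul_eq_mul]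
    rcases (Rt j t).eq_empty_or_nonempty with hRe | hRne
    · have hQeq : Q j = (HsT j t).biUnion cube := by
        refine Finset.Subset.antisymm ?_ hsubQ
        intro x hx
        by_contra hxn
        exact (Finset.eq_empty_iff_forall_notMem.mp hRe x)
          (Finset.mem_sdiff.mpr ⟨hx, hxn⟩)
      have key := aa_general hAA (HsT j t) cube hdisj
      rw [← hQeq] at key
      refine key.trans ?_
      rw [hbsum]
      have h0 : (0:ℝ) ≤ (C0 + D0) * (Rt j t).card :=
        mul_nonneg (add_nonneg hC0nn hD0nn) (Nat.cast_nonneg _)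
      linarith
    · have hdR : ∀ h ∈ HsT j t, Disjoint (Rt j t) (cube h) := by
        intro h hh
        refine Finset.disjoint_left.mpr (fun x hR hxc => ?_)
        exact (Finset.mem_sdiff.mp hR).2 (Finset.mem_biUnion.mpr ⟨h, hh, hxc⟩)
      have key := aa_withR hAA (HsT j t) cube (Rt j t) hdisj hdR
      have hU : Rt j t ∪ (HsT j t).biUnion cube = Q j := Finset.sdiff_union_of_subset hsubQ
      rw [hU] at key
      have hsplit : F (Q j) - ∑ h ∈ HsT j t, F (cube h)
          = (F (Q j) - (F (Rt j t) + ∑ h ∈ HsT j t, F (cube h))) + F (Rt j t) := by abel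
      calc ‖F (Q j) - ∑ h ∈ HsT j t, F (cube h)‖
          ≤ ‖F (Q j) - (F (Rt j t) + ∑ h ∈ HsT j t, F (cube h))‖ + ‖F (Rt j t)‖ := by
            rw [hsplit]; exact norm_add_le _ _
        _ ≤ (b.b (Rt j t) + ∑ h ∈ HsT j t, b.b (cube h)) + C0 * (Rt j t).card :=
            add_le_add key (hC0' _)
        _ ≤ (C0 + D0) * (Rt j t).card + (HsT j t).card * b.b Λ := by
            rw [hbsum]
            have hDR := hD0' _ hRne
            have : (0:ℝ) ≤ (Rt j t).card := Nat.cast_nonneg _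
            nlinarith [hDR]
  have hsum_fib : ∀ j, ∑ t ∈ Λ, ∑ h ∈ HsT j t, F (cube h) = ∑ h ∈ Hs j, F (cube h) :=
    fun j => Finset.sum_fiberwise_of_maps_to (fun h _ => hofsmem h) _
  have hcard_fib : ∀ j, ∑ t ∈ Λ, ((HsT j t).card : ℝ) = ((Hs j).card : ℝ) := by
    intro j
    have h := (Finset.card_eq_sum_card_fiberwise (s := Hs j) (t := Λ) (f := ofs)
      (fun h _ => hofsmem h)).symm
    rw [← Nat.cast_sum]
    exact_mod_cast congrArg (Nat.cast : ℕ → ℝ) h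
  have est2 : ∀ j, ‖(Λ.card : ℝ) • F (Q j) - ∑ h ∈ Hs j, F (cube h)‖
      ≤ (C0 + D0) * ((Λ.card : ℝ) * Bdy j) + ((Q j).card : ℝ) * b.b Λ := by
    intro j
    have heq : (Λ.card : ℝ) • F (Q j) - ∑ h ∈ Hs j, F (cube h)
        = ∑ t ∈ Λ, (F (Q j) - ∑ h ∈ HsT j t, F (cube h)) := by
      rw [Finset.sum_sub_distrib, hsum_fib j, Finset.sum_const,
        Nat.cast_smul_eq_nsmul ℝ]
    rw [heq]
    refine (norm_sum_le _ _).trans ?_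
    have step : ∑ t ∈ Λ, ‖F (Q j) - ∑ h ∈ HsT j t, F (cube h)‖
        ≤ ∑ t ∈ Λ, ((C0 + D0) * (Rt j t).card + (HsT j t).card * b.b Λ) :=
      Finset.sum_le_sum (fun t _ => est1 j t)
    refine step.trans ?_
    rw [Finset.sum_add_distrib, ← Finset.mul_sum, ← Finset.sum_mul, hcard_fib j]
    have h1 : ∑ t ∈ Λ, ((Rt j t).card : ℝ) ≤ (Λ.card : ℝ) * Bdy j := by
      have := Finset.sum_le_sum (fun t ht => hRb j t ht)
      refine this.trans ?_
      rw [Finset.sum_const, nsmul_eq_mul]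
    have h2 : ((Hs j).card : ℝ) ≤ ((Q j).card : ℝ) := by
      exact_mod_cast Finset.card_le_card (Finset.filter_subset _ _)
    have h3 : ((Hs j).card : ℝ) * b.b Λ ≤ ((Q j).card : ℝ) * b.b Λ :=
      mul_le_mul_of_nonneg_right h2 hbΛ0
    have h4 : (C0 + D0) * (∑ t ∈ Λ, ((Rt j t).card : ℝ))
        ≤ (C0 + D0) * ((Λ.card : ℝ) * Bdy j) :=
      mul_le_mul_of_nonneg_left h1 (by positivity)
    linarith
  have hsharp : ∀ (j : ℕ) (P : {x // x ∈ Λ} → A),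
      ((Hs j).filter (fun h => pat h = P)).card
        = sharpZ Λ (extendPatZ ω Λ P) (Q j) ω := by
    intro j P
    unfold sharpZ
    refine Finset.card_bij (fun h _ => cube h) ?_ ?_ ?_
    · intro h hh
      obtain ⟨hmem, hpatP⟩ := Finset.mem_filter.mp hh
      obtain ⟨hQ', hsub'⟩ := Finset.mem_filter.mp hmem
      refine Finset.mem_filter.mpr ⟨Finset.mem_powerset.mpr hsub', -h, cube_trans h, ?_⟩
      intro v hv
      rw [sub_neg_eq_add]
      have : extendPatZ ω Λ P v = P ⟨v, hv⟩ := by simp [extendPatZ, hv]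
      rw [this, ← hpatP]
    · intro h1 _ h2 _ hc
      exact cube_inj _ _ hc
    · intro Λ'' hΛ''
      obtain ⟨hpow, g, hg, hp⟩ := Finset.mem_filter.mp hΛ''
      have hceq : cube (-g) = Λ'' := by
        rw [hg, cube_trans]
        simp
      have hsub' : cube (-g) ⊆ Q j := hceq ▸ Finset.mem_powerset.mp hpow
      refine ⟨-g, Finset.mem_filter.mpr
        ⟨Finset.mem_filter.mpr ⟨hsub' (self_mem_cube (-g)), hsub'⟩, ?_⟩, hceq⟩
      funext v
      obtain ⟨v, hv⟩ := v
      have hpv := hp v hv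
      have : extendPatZ ω Λ P v = P ⟨v, hv⟩ := by simp [extendPatZ, hv]
      rw [this] at hpv
      show ω (v + -g) = P ⟨v, hv⟩
      rw [← sub_eq_add_neg]
      exact hpv
  have est3 : ∀ j, ∑ h ∈ Hs j, F (cube h)
      = ∑ P : {x // x ∈ Λ} → A,
          (sharpZ Λ (extendPatZ ω Λ P) (Q j) ω : ℝ) • Ft Λ (extendPatZ ω Λ P) := by
    intro j
    rw [← Finset.sum_fiberwise_of_maps_to (g := pat) (t := Finset.univ)
      (fun h _ => Finset.mem_univ (pat h)) (fun h => F (cube h))]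
    refine Finset.sum_congr rfl (fun P _ => ?_)
    have hfib : ∀ h ∈ (Hs j).filter (fun h => pat h = P),
        F (cube h) = Ft Λ (extendPatZ ω Λ P) := by
      intro h hh
      rw [hFcube h, (Finset.mem_filter.mp hh).2]
    rw [Finset.sum_congr rfl hfib, Finset.sum_const, ← hsharp j P,
      ← Nat.cast_smul_eq_nsmul ℝ]
  -- the averaged quantity
  set X : ℕ → B := fun j => ((Q j).card : ℝ)⁻¹ • F (Q j)
      - ∑ P : {x // x ∈ Λ} → A,
          ((sharpZ Λ (extendPatZ ω Λ P) (Q j) ω : ℝ) / (Q j).card) •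
            (((Λ.card : ℝ))⁻¹ • Ft Λ (extendPatZ ω Λ P)) with hXdef
  have hXnorm : ∀ j, ‖X j‖ ≤ (C0 + D0) * (Bdy j / (Q j).card) + b.b Λ / Λ.card := by
    intro j
    have hqpos : (0:ℝ) < (Q j).card := by
      exact_mod_cast Finset.card_pos.mpr (hQ.1 j)
    have hVne : ((Λ.card : ℝ)) ≠ 0 := ne_of_gt hVpos
    have hqne : (((Q j).card : ℝ)) ≠ 0 := ne_of_gt hqpos
    have hXeq : X j = (((Λ.card : ℝ)) * ((Q j).card : ℝ))⁻¹ •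
        ((Λ.card : ℝ) • F (Q j) - ∑ P : {x // x ∈ Λ} → A,
          (sharpZ Λ (extendPatZ ω Λ P) (Q j) ω : ℝ) • Ft Λ (extendPatZ ω Λ P)) := by
      simp only [hXdef]
      rw [smul_sub, Finset.smul_sum, smul_smul]
      rw [scalar_id1 _ _ hVne hqne]
      congr 1
      refine Finset.sum_congr rfl (fun P _ => ?_)
      rw [smul_smul, scalar_id2 _ _ _ hVne hqne]
      exact mul_smul _ _ _
    have hpos : (0:ℝ) < (Λ.card : ℝ) * ((Q j).card : ℝ) := mul_pos hVpos hqpos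
    have hinvnn : (0:ℝ) ≤ ((Λ.card : ℝ) * ((Q j).card : ℝ))⁻¹ := (inv_pos.mpr hpos).le
    have hnorm : ‖X j‖ = ((Λ.card : ℝ) * ((Q j).card : ℝ))⁻¹ *
        ‖(Λ.card : ℝ) • F (Q j) - ∑ P : {x // x ∈ Λ} → A,
          (sharpZ Λ (extendPatZ ω Λ P) (Q j) ω : ℝ) • Ft Λ (extendPatZ ω Λ P)‖ := by
      rw [hXeq, norm_smul, Real.norm_eq_abs, abs_of_nonneg hinvnn]
    rw [hnorm, ← est3 j]
    have hle := est2 j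
    calc ((Λ.card : ℝ) * ((Q j).card : ℝ))⁻¹ *
          ‖(Λ.card : ℝ) • F (Q j) - ∑ h ∈ Hs j, F (cube h)‖
        ≤ ((Λ.card : ℝ) * ((Q j).card : ℝ))⁻¹ *
          ((C0 + D0) * ((Λ.card : ℝ) * Bdy j) + ((Q j).card : ℝ) * b.b Λ) :=
          mul_le_mul_of_nonneg_left hle hinvnn
      _ = (C0 + D0) * (Bdy j / (Q j).card) + b.b Λ / Λ.card :=
          scalar_id3 _ _ _ _ _ hVne hqne
  have hXlim : Tendsto X atTop
      (nhds (Fbar - ∑ P : {x // x ∈ Λ} → A,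
        ν Λ (extendPatZ ω Λ P) • (((Λ.card : ℝ))⁻¹ • Ft Λ (extendPatZ ω Λ P)))) := by
    apply Tendsto.sub hFbar
    apply tendsto_finset_sum
    intro P _
    exact (hν Λ (extendPatZ ω Λ P)).smul_const _
  have hepslim : Tendsto (fun j => (C0 + D0) * (Bdy j / (Q j).card) + b.b Λ / Λ.card)
      atTop (nhds (b.b Λ / Λ.card)) := by
    have h0 : Tendsto (fun j => Bdy j / ((Q j).card : ℝ)) atTop (nhds 0) :=
      hQ.2 (d*L) (Nat.mul_pos hd hL)
    have := (h0.const_mul (C0 + D0)).add_const (b.b Λ / Λ.card)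
    simpa using this
  have hfinal := le_of_tendsto_of_tendsto' hXlim.norm hepslim hXnorm
  simpa using hfinal
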